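/- Let κ be an infinite cardinal, φ a positive modulus, p ∈ [1,∞), and let X be a (<κ)-φ-octahedral normed space. Then for every normed space Y the direct sum X ⊕_p Y is (<κ)-(φ_p ∘ φ)-octahedral. -/

import Mathlib

open Set Metric ENNReal

universe u

/-- A set `P` in a normed space is `r`-separated if `‖x - y‖ ≥ r`
for all distinct `x, y ∈ P`. -/
def IsRSeparated {X : Type u} [NormedAddCommGroup X] (r : ℝ) (P : Set X) : Prop :=
  ∀ x ∈ P, ∀ y ∈ P, x ≠ y → r ≤ ‖x - y‖

/-- A set `P` in a normed space is `r`-dense if every point of the space is within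
distance `r` of some point of `P`. -/
def IsRDense {X : Type u} [NormedAddCommGroup X] (r : ℝ) (P : Set X) : Prop :=
  ∀ x : X, ∃ p ∈ P, ‖x - p‖ ≤ r

/-- The simultaneous packing and covering constant `γ(X)`: the infimum of all `r > 0`
for which `X` contains a set that is simultaneously `2`-separated and `r`-dense. -/
noncomputable def packingCovering (X : Type u) [NormedAddCommGroup X] : ℝ :=
  sInf {r : ℝ | 0 < r ∧ ∃ P : Set X, IsRSeparated 2 P ∧ IsRDense r P}

/-- The lattice simultaneous packing and covering constant `γ*(X)`: the infimum of all
`r > 0` for which `X` contains an additive subgroup that is simultaneously `2`-separated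
and `r`-dense. -/
noncomputable def packingCoveringStar (X : Type u) [NormedAddCommGroup X] : ℝ :=
  sInf {r : ℝ | 0 < r ∧ ∃ D : AddSubgroup X,
    IsRSeparated 2 (D : Set X) ∧ IsRDense r (D : Set X)}

/-- The Kottman constant `K(X)`: the supremum of all `r > 0` such that the closed unit
ball of `X` contains an infinite `r`-separated set. -/
noncomputable def kottman (X : Type u) [NormedAddCommGroup X] : ℝ :=
  sSup {r : ℝ | 0 < r ∧ ∃ P : Set X,
    P ⊆ closedBall (0 : X) 1 ∧ P.Infinite ∧ IsRSeparated r P}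

/-- The `κ`-Kottman constant `K(X; κ)`: the supremum of all `r > 0` such that the closed
unit ball of `X` contains an `r`-separated set of cardinality `κ`. -/
noncomputable def kottmanCard (X : Type u) [NormedAddCommGroup X] (κ : Cardinal.{u}) : ℝ :=
  sSup {r : ℝ | 0 < r ∧ ∃ P : Set X,
    P ⊆ closedBall (0 : X) 1 ∧ Cardinal.mk ↥P = κ ∧ IsRSeparated r P}

/-- The density character of a topological space: the smallest cardinality of a dense
subset. -/
noncomputable def densChar (X : Type u) [TopologicalSpace X] : Cardinal.{u} :=
  sInf {c : Cardinal.{u} | ∃ s : Set X, Dense s ∧ Cardinal.mk ↥s = c}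

/-- The modulus of local uniform rotundity `δ_X(x₀, ε)` at a point `x₀`. -/
noncomputable def lurModulus {X : Type u} [NormedAddCommGroup X] (x₀ : X) (ε : ℝ) : ℝ :=
  sInf {d : ℝ | ∃ y : X, ‖y‖ ≤ 1 ∧ ε ≤ ‖x₀ - y‖ ∧ d = 1 - ‖x₀ + y‖ / 2}

/-- `x₀` is a LUR (locally uniformly rotund) point of the unit ball of `X` if it lies on
the unit sphere and `δ_X(x₀, ε) > 0` for every `ε ∈ (0, 2]`. -/
def IsLURPoint {X : Type u} [NormedAddCommGroup X] (x₀ : X) : Prop :=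
  ‖x₀‖ = 1 ∧ ∀ ε : ℝ, 0 < ε → ε ≤ 2 → 0 < lurModulus x₀ ε

/-- The modulus of convexity `δ_X(ε)` of a normed space `X`. -/
noncomputable def convexityModulus (X : Type u) [NormedAddCommGroup X] (ε : ℝ) : ℝ :=
  sInf {d : ℝ | ∃ x y : X, ‖x‖ ≤ 1 ∧ ‖y‖ ≤ 1 ∧ ε ≤ ‖x - y‖ ∧ d = 1 - ‖x + y‖ / 2}

/-- The tangential modulus of convexity `φ_X(t)`, defined through Birkhoff-James
orthogonality: `φ_X(t) = inf {‖x + t v‖ - 1 : x, v ∈ S_X, x ⊥_BJ v}`. -/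
noncomputable def tangentialModulus (X : Type u) [NormedAddCommGroup X]
    [NormedSpace ℝ X] (t : ℝ) : ℝ :=
  sInf {d : ℝ | ∃ x v : X, ‖x‖ = 1 ∧ ‖v‖ = 1 ∧
    (∀ lam : ℝ, ‖x‖ ≤ ‖x + lam • v‖) ∧ d = ‖x + t • v‖ - 1}

/-- `φ : [0,∞) → [0,∞)` is a positive modulus: `φ(0) = 0`, `φ` is continuous at `0`,
`t ↦ φ(t)/t` is non-decreasing on `(0,∞)`, and `φ(t) > 0` for `t > 0`. -/
def IsPositiveModulus (φ : ℝ → ℝ) : Prop :=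
  φ 0 = 0 ∧ Filter.Tendsto φ (nhdsWithin 0 (Set.Ici 0)) (nhds 0) ∧
    (∀ s t : ℝ, 0 < s → s ≤ t → φ s / s ≤ φ t / t) ∧ ∀ t : ℝ, 0 < t → 0 < φ t

/-- The positive modulus `φ_p(t) = (1 + t^p)^(1/p) - 1` (real exponents). -/
noncomputable def phiP (p : ℝ) (t : ℝ) : ℝ := (1 + t ^ p) ^ (1 / p) - 1

/-- A normed space `X` is `(<κ)-octahedral` if for every `ε > 0` and every closed
subspace `Z` of `X` of density character `< κ` there is a unit vector `x` with
`‖z + λ x‖ ≥ (1 - ε)(‖z‖ + |λ|)` for all `z ∈ Z`, `λ ∈ ℝ`. -/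
def KappaOctahedral (κ : Cardinal.{u}) (X : Type u) [NormedAddCommGroup X]
    [NormedSpace ℝ X] : Prop :=
  ∀ ε : ℝ, 0 < ε → ∀ Z : Submodule ℝ X, IsClosed (Z : Set X) → densChar ↥Z < κ →
    ∃ x : X, ‖x‖ = 1 ∧ ∀ z ∈ Z, ∀ lam : ℝ, (1 - ε) * (‖z‖ + |lam|) ≤ ‖z + lam • x‖

/-- A normed space `X` is `(<κ)-φ-octahedral` if for every `ε > 0` and every closed
subspace `Z` of `X` of density character `< κ` there is a unit vector `x` with
`‖z + λ x‖ ≥ (1 - ε)(1 + φ(|λ|))` for all `z` in the unit sphere of `Z` and `λ ∈ ℝ`. -/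
def PhiOctahedral (κ : Cardinal.{u}) (φ : ℝ → ℝ) (X : Type u) [NormedAddCommGroup X]
    [NormedSpace ℝ X] : Prop :=
  ∀ ε : ℝ, 0 < ε → ∀ Z : Submodule ℝ X, IsClosed (Z : Set X) → densChar ↥Z < κ →
    ∃ x : X, ‖x‖ = 1 ∧ ∀ z ∈ Z, ‖z‖ = 1 →
      ∀ lam : ℝ, (1 - ε) * (1 + φ |lam|) ≤ ‖z + lam • x‖

lemma densChar_le_of_denseRange {A B : Type u} [TopologicalSpace A] [TopologicalSpace B]
    (f : A → B) (hf : Continuous f) (hd : DenseRange f) : densChar B ≤ densChar A := by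
  have hne : {c : Cardinal.{u} | ∃ s : Set A, Dense s ∧ Cardinal.mk ↥s = c}.Nonempty :=
    ⟨_, Set.univ, dense_univ, rfl⟩
  obtain ⟨D, hD, hmk⟩ := csInf_mem hne
  calc densChar B ≤ Cardinal.mk ↥(f '' D) := csInf_le' ⟨f '' D, hd.dense_image hf hD, rfl⟩
    _ ≤ Cardinal.mk ↥D := Cardinal.mk_image_le
    _ = densChar A := hmk

lemma densChar_le_one {A : Type u} [TopologicalSpace A] [Subsingleton A] :
    densChar A ≤ 1 := by
  calc densChar A ≤ Cardinal.mk ↥(Set.univ : Set A) := csInf_le' ⟨Set.univ, dense_univ, rfl⟩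
    _ ≤ 1 := Cardinal.le_one_iff_subsingleton.mpr (by infer_instance)

lemma densChar_le_aleph0 {A : Type u} [TopologicalSpace A] [TopologicalSpace.SeparableSpace A] :
    densChar A ≤ Cardinal.aleph0 := by
  obtain ⟨s, hsc, hsd⟩ := TopologicalSpace.exists_countable_dense A
  exact le_trans (csInf_le' ⟨s, hsd, rfl⟩)
    (by rwa [Cardinal.mk_le_aleph0_iff, Set.countable_coe_iff])

lemma aleph0_le_densChar {A : Type u} [TopologicalSpace A] [T1Space A] [Infinite A] :
    Cardinal.aleph0 ≤ densChar A := by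
  refine le_csInf ⟨_, Set.univ, dense_univ, rfl⟩ ?_
  rintro c ⟨s, hs, rfl⟩
  have hinf : s.Infinite := by
    intro hfin
    have h1 : closure s = s := hfin.isClosed.closure_eq
    have h2 := hs.closure_eq
    rw [h1] at h2
    exact (Set.infinite_univ (α := A)) (h2 ▸ hfin)
  rw [Cardinal.aleph0_le_mk_iff, Set.infinite_coe_iff]; exact hinf

lemma modulus_nonneg {φ : ℝ → ℝ} (hφ : IsPositiveModulus φ) {t : ℝ} (ht : 0 ≤ t) : 0 ≤ φ t := by
  rcases ht.eq_or_lt with h | h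
  · rw [← h, hφ.1]
  · exact (hφ.2.2.2 t h).le

lemma add_rpow_le_rpow_add' {q a b : ℝ} (hq : 1 ≤ q) (ha : 0 ≤ a) (hb : 0 ≤ b) :
    a ^ q + b ^ q ≤ (a + b) ^ q := by
  have h := NNReal.coe_le_coe.mpr (NNReal.add_rpow_le_rpow_add a.toNNReal b.toNNReal hq)
  rw [NNReal.coe_add, NNReal.coe_rpow, NNReal.coe_rpow, NNReal.coe_rpow, NNReal.coe_add,
    Real.coe_toNNReal a ha, Real.coe_toNNReal b hb] at h
  exact h

lemma phi_le_self {X : Type u} [NormedAddCommGroup X] [NormedSpace ℝ X]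
    {κ : Cardinal.{u}} (hκ : Cardinal.aleph0 < κ) {φ : ℝ → ℝ} (hφ : IsPositiveModulus φ)
    (hX : PhiOctahedral κ φ X) : ∀ t : ℝ, 0 ≤ t → φ t ≤ t := by
  obtain ⟨x₁, hx₁, -⟩ := hX 1 one_pos ⊥ (by rw [Submodule.bot_coe]; exact isClosed_singleton)
    (lt_trans (lt_of_le_of_lt densChar_le_one Cardinal.one_lt_aleph0) hκ)
  set Z' : Submodule ℝ X := Submodule.span ℝ {x₁} with hZ'
  have hZ'c : IsClosed (Z' : Set X) := Submodule.closed_of_finiteDimensional Z'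
  have hsurj : Function.Surjective
      (fun r : ℝ => (⟨r • x₁, Submodule.mem_span_singleton.mpr ⟨r, rfl⟩⟩ : ↥Z')) := by
    rintro ⟨y, hy⟩
    obtain ⟨r, rfl⟩ := Submodule.mem_span_singleton.mp hy
    exact ⟨r, rfl⟩
  have hcont : Continuous
      (fun r : ℝ => (⟨r • x₁, Submodule.mem_span_singleton.mpr ⟨r, rfl⟩⟩ : ↥Z')) :=
    Continuous.subtype_mk (continuous_id.smul continuous_const) _
  haveI : TopologicalSpace.SeparableSpace ↥Z' := hsurj.denseRange.separableSpace hcont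
  have hZ'd : densChar ↥Z' < κ := lt_of_le_of_lt densChar_le_aleph0 hκ
  intro t ht
  rcases ht.eq_or_lt with h0 | ht0
  · rw [← h0, hφ.1]
  have key : ∀ ε : ℝ, 0 < ε → (1 - ε) * (1 + φ t) ≤ 1 + t := by
    intro ε hε
    obtain ⟨x₂, hx₂, h⟩ := hX ε hε Z' hZ'c hZ'd
    have h1 := h x₁ (Submodule.mem_span_singleton_self x₁) hx₁ t
    rw [abs_of_nonneg ht] at h1
    calc (1-ε)*(1+φ t) ≤ ‖x₁ + t • x₂‖ := h1
      _ ≤ ‖x₁‖ + ‖t • x₂‖ := norm_add_le _ _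
      _ = 1 + t := by rw [hx₁, norm_smul, hx₂, Real.norm_eq_abs, abs_of_nonneg ht, mul_one]
  have hpos : 0 < 1 + φ t := by linarith [hφ.2.2.2 t ht0]
  by_contra hlt
  push_neg at hlt
  have hε : 0 < (φ t - t) / (2 * (1 + φ t)) := div_pos (by linarith) (by linarith)
  have hk := key _ hε
  have e : (1 - (φ t - t)/(2*(1 + φ t))) * (1 + φ t) = (1 + φ t) - (φ t - t)/2 := by
    field_simp
  rw [e] at hk
  linarith

/-- If `X` is a `(<κ)-φ`-octahedral normed space and `p ∈ [1, ∞)`, then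
`X ⊕_p Y` is `(<κ)-(φ_p ∘ φ)`-octahedral for every normed space `Y`. -/
theorem prodLp_phiP_comp_octahedral {X Y : Type u} [NormedAddCommGroup X]
    [NormedSpace ℝ X] [NormedAddCommGroup Y] [NormedSpace ℝ Y]
    (κ : Cardinal.{u}) (hκ : Cardinal.aleph0 ≤ κ)
    (φ : ℝ → ℝ) (hφ : IsPositiveModulus φ)
    (p : ℝ) (hp : 1 ≤ p) [Fact (1 ≤ ENNReal.ofReal p)]
    (hX : PhiOctahedral κ φ X) :
    PhiOctahedral κ (fun t => phiP p (φ t)) (WithLp (ENNReal.ofReal p) (X × Y)) := by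
  intro ε hε Z hZclosed hZdens
  have hp0 : (0:ℝ) < p := lt_of_lt_of_le one_pos hp
  set P := ENNReal.ofReal p with hP
  have hpt : P.toReal = p := ENNReal.toReal_ofReal hp0.le
  have hPt0 : 0 < P.toReal := by rw [hpt]; exact hp0
  have hform : ∀ w : WithLp P (X × Y), ‖w‖ = (‖w.fst‖ ^ p + ‖w.snd‖ ^ p) ^ (1/p) := by
    intro w
    rw [WithLp.prod_norm_eq_add hPt0, hpt]
  -- projection onto X
  let T : WithLp P (X × Y) →L[ℝ] X :=
    (ContinuousLinearMap.fst ℝ X Y).comp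
      (WithLp.prodContinuousLinearEquiv P ℝ X Y).toContinuousLinearMap
  have hT : ∀ w : WithLp P (X × Y), T w = w.fst := fun _ => rfl
  set ZX : Submodule ℝ X := (Z.map (T : WithLp P (X × Y) →ₗ[ℝ] X)).topologicalClosure with hZX
  have hmemZX : ∀ z : ↥Z, T (z : WithLp P (X × Y)) ∈ ZX := fun z =>
    Submodule.le_topologicalClosure _ (Submodule.mem_map_of_mem z.2)
  let f : ↥Z → ↥ZX := fun z => ⟨T (z : WithLp P (X × Y)), hmemZX z⟩
  have hfc : Continuous f :=
    Continuous.subtype_mk (T.continuous.comp continuous_subtype_val) _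
  have hfd : DenseRange f := by
    intro x
    rw [closure_subtype]
    have h1 : (Subtype.val '' Set.range f) =
        (T : WithLp P (X × Y) →ₗ[ℝ] X) '' (Z : Set (WithLp P (X × Y))) := by
      rw [← Set.range_comp, Set.image_eq_range]
      rfl
    rw [h1]
    have hx2 : (x : X) ∈ (((Z.map (T : WithLp P (X × Y) →ₗ[ℝ] X)).topologicalClosure :
        Submodule ℝ X) : Set X) := x.2
    rwa [Submodule.topologicalClosure_coe, Submodule.map_coe] at hx2
  have hZXd : densChar ↥ZX < κ := lt_of_le_of_lt (densChar_le_of_denseRange f hfc hfd) hZdens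
  obtain ⟨x₀, hx₀, hkey⟩ := hX ε hε ZX (Submodule.isClosed_topologicalClosure _) hZXd
  refine ⟨(WithLp.equiv P (X × Y)).symm (x₀, 0), ?_, ?_⟩
  · rw [hform]
    simp [hx₀, Real.zero_rpow hp0.ne', Real.one_rpow]
  intro z hz hznorm lam
  set x : WithLp P (X × Y) := (WithLp.equiv P (X × Y)).symm (x₀, 0) with hx
  set t := |lam| with htdef
  set s := φ t with hsdef
  have ht : 0 ≤ t := abs_nonneg lam
  have hs0 : 0 ≤ s := modulus_nonneg hφ ht
  set a := ‖z.fst‖ with ha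
  set b := ‖z.snd‖ with hb
  have ha0 : 0 ≤ a := norm_nonneg _
  have hb0 : 0 ≤ b := norm_nonneg _
  set A := ‖z.fst + lam • x₀‖ with hA
  have hA0 : 0 ≤ A := norm_nonneg _
  have habp : a ^ p + b ^ p = 1 := by
    have hzn : (a ^ p + b ^ p) ^ (1/p) = 1 := by rw [← hform z]; exact hznorm
    have h0 : (0:ℝ) ≤ a ^ p + b ^ p := by positivity
    have h2 := congrArg (· ^ p) hzn
    simpa [← Real.rpow_mul h0, one_div, inv_mul_cancel₀ hp0.ne', Real.one_rpow] using h2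
  have hxf : x.fst = x₀ := rfl
  have hxs : x.snd = (0 : Y) := rfl
  have hfst : (z + lam • x).fst = z.fst + lam • x₀ := by
    rw [WithLp.add_fst, WithLp.smul_fst, hxf]
  have hsnd : (z + lam • x).snd = z.snd := by
    rw [WithLp.add_snd, WithLp.smul_snd, hxs, smul_zero, add_zero]
  have hnormsum : ‖z + lam • x‖ = (A ^ p + b ^ p) ^ (1/p) := by
    rw [hform, hfst, hsnd]
  have hphiP : phiP p s = (1 + s ^ p) ^ (1/p) - 1 := rfl
  rcases le_or_gt 1 ε with hε1 | hε1
  · -- trivial case ε ≥ 1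
    have h2 : (0:ℝ) ≤ 1 + phiP p s := by
      rw [hphiP]
      have : (1:ℝ) ≤ (1 + s ^ p) ^ (1/p) :=
        Real.one_le_rpow (le_add_of_nonneg_right (Real.rpow_nonneg hs0 p)) (by positivity)
      linarith
    calc (1 - ε) * (1 + phiP p s) ≤ 0 :=
          mul_nonpos_of_nonpos_of_nonneg (by linarith) h2
      _ ≤ ‖z + lam • x‖ := norm_nonneg _
  set c := 1 - ε with hc
  have hc0 : 0 < c := by rw [hc]; linarith
  have hc1 : c ≤ 1 := by rw [hc]; linarith
  have hz1 : z.fst ∈ ZX := by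
    have := hmemZX ⟨z, hz⟩
    rwa [hT] at this
  -- key lower bound on A
  have hAkey : c * (a + s) ≤ A := by
    rcases eq_or_ne z.fst 0 with hzf | hzf
    · -- first coordinate zero: use φ t ≤ t
      have hzA : A = t := by
        rw [hA, hzf, zero_add, norm_smul, hx₀, mul_one, Real.norm_eq_abs]
      have hZinf : Infinite ↥Z := by
        have hzne : z ≠ 0 := by
          intro h; rw [h, norm_zero] at hznorm; exact one_ne_zero hznorm.symm
        exact Infinite.of_injective (fun r : ℝ => (⟨r • z, Z.smul_mem r hz⟩ : ↥Z))
          (fun r r' hrr' => smul_left_injective ℝ hzne (congrArg Subtype.val hrr'))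
      have hκ0 : Cardinal.aleph0 < κ :=
        lt_of_le_of_lt (aleph0_le_densChar (A := ↥Z)) hZdens
      have hst : s ≤ t := phi_le_self hκ0 hφ hX t ht
      rw [hzA, ha, hzf, norm_zero, zero_add]
      calc c * s ≤ 1 * s := mul_le_mul_of_nonneg_right hc1 hs0
        _ = s := one_mul s
        _ ≤ t := hst
    · -- first coordinate nonzero: scale and use octahedrality of X
      have ha' : 0 < a := by rw [ha]; exact norm_pos_iff.mpr hzf
      have hmem : a⁻¹ • z.fst ∈ ZX := ZX.smul_mem _ hz1
      have hnrm : ‖a⁻¹ • z.fst‖ = 1 := by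
        rw [norm_smul, Real.norm_eq_abs, abs_of_pos (inv_pos.mpr ha'), ← ha,
          inv_mul_cancel₀ ha'.ne']
      have hk := hkey _ hmem hnrm (lam / a)
      have heq : a⁻¹ • z.fst + (lam / a) • x₀ = a⁻¹ • (z.fst + lam • x₀) := by
        rw [smul_add, smul_smul, div_eq_inv_mul]
      rw [heq, norm_smul, Real.norm_eq_abs, abs_of_pos (inv_pos.mpr ha'), ← hA,
        abs_div, abs_of_pos ha', ← htdef] at hk
      -- hk : c * (1 + φ (t / a)) ≤ a⁻¹ * A
      have ha1 : a ≤ 1 := by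
        have hap : a ^ p ≤ 1 := by linarith [Real.rpow_nonneg hb0 p]
        have h4 : (a ^ p) ^ (1/p) ≤ (1:ℝ) ^ (1/p) :=
          Real.rpow_le_rpow (Real.rpow_nonneg ha0 p) hap (by positivity)
        rwa [← Real.rpow_mul ha0, mul_one_div, div_self hp0.ne', Real.rpow_one,
          Real.one_rpow] at h4
      have hsa : s ≤ a * φ (t / a) := by
        rcases ht.eq_or_lt with h0 | ht0
        · rw [hsdef, ← h0, hφ.1, zero_div, hφ.1, mul_zero]
        · have hta : t ≤ t / a := by
            rw [le_div_iff₀ ha']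
            nlinarith
          have hr := hφ.2.2.1 t (t / a) ht0 hta
          rw [div_le_div_iff₀ ht0 (by positivity)] at hr
          have h' : φ t * t ≤ a * φ (t / a) * t := by
            have h5 := mul_le_mul_of_nonneg_left hr ha0
            calc φ t * t = a * (φ t * (t / a)) := by field_simp
              _ ≤ a * (φ (t / a) * t) := h5
              _ = a * φ (t / a) * t := by ring
          exact le_of_mul_le_mul_right h' ht0
      have hk2 : a * (c * (1 + φ (t / a))) ≤ A := by
        have h6 := mul_le_mul_of_nonneg_left hk ha0
        calc a * (c * (1 + φ (t / a))) ≤ a * (a⁻¹ * A) := h6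
          _ = A := by field_simp
      calc c * (a + s) ≤ c * (a + a * φ (t / a)) :=
            mul_le_mul_of_nonneg_left (by linarith) hc0.le
        _ = a * (c * (1 + φ (t / a))) := by ring
        _ ≤ A := hk2
  -- combine via p-norm computations
  have hφt : 0 ≤ φ (t) := hs0
  have hcp0 : (0:ℝ) ≤ c ^ p := Real.rpow_nonneg hc0.le p
  have hcp1 : c ^ p ≤ 1 := Real.rpow_le_one hc0.le hc1 hp0.le
  have h1 : a ^ p + s ^ p ≤ (a + s) ^ p := add_rpow_le_rpow_add' hp ha0 hs0
  have h2 : (c * (a + s)) ^ p ≤ A ^ p :=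
    Real.rpow_le_rpow (by positivity) hAkey hp0.le
  have h3 : (c * (a + s)) ^ p = c ^ p * (a + s) ^ p :=
    Real.mul_rpow hc0.le (by positivity)
  have hbp0 : (0:ℝ) ≤ b ^ p := Real.rpow_nonneg hb0 p
  have hmain : c ^ p * (1 + s ^ p) ≤ A ^ p + b ^ p := by
    have e1 : c ^ p * (1 + s ^ p) = c ^ p * (a ^ p + s ^ p) + c ^ p * b ^ p := by
      rw [← habp]; ring
    have e2 : c ^ p * (a ^ p + s ^ p) ≤ c ^ p * (a + s) ^ p :=
      mul_le_mul_of_nonneg_left h1 hcp0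
    have e3 : c ^ p * b ^ p ≤ 1 * b ^ p := mul_le_mul_of_nonneg_right hcp1 hbp0
    rw [e1]
    linarith [h3 ▸ h2]
  have hcpc : (c ^ p) ^ (1/p) = c := by
    rw [← Real.rpow_mul hc0.le, mul_one_div, div_self hp0.ne', Real.rpow_one]
  calc (1 - ε) * (1 + phiP p s) = c * (1 + s ^ p) ^ (1/p) := by
        rw [← hc, hphiP]; ring
    _ = (c ^ p * (1 + s ^ p)) ^ (1/p) := by
        rw [Real.mul_rpow hcp0 (by positivity), hcpc]
    _ ≤ (A ^ p + b ^ p) ^ (1/p) :=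
        Real.rpow_le_rpow (by positivity) hmain (by positivity)
    _ = ‖z + lam • x‖ := hnormsum.symm
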